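/- Property (S*) holds if and only if property (B*) holds. That is: there exists a sequence (φₙ : ω₁ → ω₁)ₙ∈ℕ such that for every subset I of ω₁ of cardinality ℵ₁, φₙ '' I = ω₁ for all but finitely many n, if and only if there exists a sequence (ψₙ : ω₁ → ω₁)ₙ∈ℕ such that for every subset I of ω₁ of cardinality ℵ₁, for all but finitely many n, for every β ∈ ω₁ the set {α ∈ I : ψₙ(α) = β} is uncountable. -/

import Mathlib

open Cardinal Set

/-- ω₁, the first uncountable ordinal, viewed as the set of all countable ordinals. -/
abbrev Omega1 := {o : Ordinal.{0} // o < (Cardinal.aleph 1).ord}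

set_option linter.unnecessarySimpa false in
lemma mk_Omega1 : #Omega1 = Cardinal.aleph 1 := by
  have := Ordinal.mk_Iio_ordinal ((Cardinal.aleph 1).ord)
  simp only [Cardinal.card_ord] at this
  have h2 : Cardinal.lift.{1} (Cardinal.aleph 1) = Cardinal.aleph 1 := by
    rw [Cardinal.lift_aleph]; norm_num
  rw [h2] at this
  exact this

/-- Property (S*) holds if and only if property (B*) holds. -/
theorem Sstar_iff_Bstar :
    (∃ φ : ℕ → Omega1 → Omega1,
      ∀ I : Set Omega1, #I = Cardinal.aleph 1 →
        {n : ℕ | φ n '' I ≠ Set.univ}.Finite) ↔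
    (∃ ψ : ℕ → Omega1 → Omega1,
      ∀ I : Set Omega1, #I = Cardinal.aleph 1 →
        {n : ℕ | ∃ β : Omega1, {α ∈ I | ψ n α = β}.Countable}.Finite) := by
  constructor
  · rintro ⟨φ, hφ⟩
    have hprod : #(Omega1 × Omega1) = #Omega1 := by
      rw [Cardinal.mk_prod, Cardinal.lift_id, mk_Omega1,
        Cardinal.mul_eq_self (Cardinal.aleph0_le_aleph 1)]
    obtain ⟨p⟩ : Nonempty (Omega1 ≃ Omega1 × Omega1) := Cardinal.eq.mp hprod.symm
    refine ⟨fun n α => (p (φ n α)).1, fun I hI => (hφ I hI).subset ?_⟩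
    intro n hn
    simp only [Set.mem_setOf_eq] at hn ⊢
    obtain ⟨β, hβ⟩ := hn
    intro himg
    -- every γ is attained by φ n on I
    have hsurj : ∀ γ : Omega1, ∃ α, α ∈ I ∧ φ n α = γ := by
      intro γ
      have : γ ∈ φ n '' I := himg ▸ Set.mem_univ γ
      obtain ⟨α, hα, hαγ⟩ := this
      exact ⟨α, hα, hαγ⟩
    choose f hfI hfφ using fun δ : Omega1 => hsurj (p.symm (β, δ))
    have hmem : ∀ δ, f δ ∈ {α ∈ I | (p (φ n α)).1 = β} := by
      intro δ
      refine ⟨hfI δ, ?_⟩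
      rw [hfφ δ, Equiv.apply_symm_apply]
    have hinj : Function.Injective (fun δ : Omega1 => (⟨f δ, hmem δ⟩ :
        {α ∈ I | (p (φ n α)).1 = β})) := by
      intro δ δ' h
      have h1 : f δ = f δ' := congrArg Subtype.val h
      have h2 : p.symm (β, δ) = p.symm (β, δ') := by rw [← hfφ δ, ← hfφ δ', h1]
      have := p.symm.injective h2
      exact (Prod.mk.injEq _ _ _ _ ▸ this).2
    have hle : Cardinal.aleph 1 ≤ #{α ∈ I | (p (φ n α)).1 = β} := by
      rw [← mk_Omega1]
      exact Cardinal.mk_le_of_injective hinj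
    have hcnt : #{α ∈ I | (p (φ n α)).1 = β} ≤ Cardinal.aleph0 :=
      hβ.le_aleph0
    exact absurd (hle.trans hcnt) (by
      simpa using (Cardinal.aleph0_lt_aleph_one).not_le ∘ fun h => h)
  · rintro ⟨ψ, hψ⟩
    refine ⟨ψ, fun I hI => (hψ I hI).subset ?_⟩
    intro n hn
    simp only [Set.mem_setOf_eq] at hn ⊢
    rw [Set.ne_univ_iff_exists_notMem] at hn
    obtain ⟨β, hβ⟩ := hn
    refine ⟨β, ?_⟩
    convert Set.countable_empty
    ext α
    simp only [Set.mem_setOf_eq, Set.mem_empty_iff_false, iff_false, not_and]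
    intro hαI hαβ
    exact hβ ⟨α, hαI, hαβ⟩
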